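/- Let P = {x ∈ ℝⁿ | Ax ≤ 0, Bx = 0} for matrices A ∈ ℝ^{m₁×n}, B ∈ ℝ^{m₂×n}. Then the polar cone of P equals {Aᵀμ + Bᵀν | μ ∈ ℝ^{m₁}, μ ≥ 0, ν ∈ ℝ^{m₂}}. -/

import Mathlib

open Matrix Finset
open scoped RealInnerProductSpace


open Matrix Finset
open scoped RealInnerProductSpace

variable {E : Type} [NormedAddCommGroup E] [NormedSpace ℝ E] [FiniteDimensional ℝ E]

/-- The cone of nonnegative combinations of a finite family. -/
def coneSet {ι : Type} [Fintype ι] (v : ι → E) : Set E :=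
  {x | ∃ l : ι → ℝ, 0 ≤ l ∧ x = ∑ i, l i • v i}

lemma isClosed_coneSet_of_li {ι : Type} [Fintype ι] (v : ι → E)
    (h : LinearIndependent ℝ v) : IsClosed (coneSet v) := by
  classical
  let L : (ι → ℝ) →ₗ[ℝ] E :=
    { toFun := fun l => ∑ i, l i • v i
      map_add' := by intro a b; simp [add_smul, Finset.sum_add_distrib]
      map_smul' := by intro c a; simp [smul_smul, Finset.smul_sum] }
  have hker : LinearMap.ker L = ⊥ := by
    rw [LinearMap.ker_eq_bot']
    intro l hl
    exact funext fun i => Fintype.linearIndependent_iff.1 h l hl i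
  have hce := LinearMap.isClosedEmbedding_of_injective (f := L) hker
  have hset : coneSet v = L '' {l | 0 ≤ l} := by
    ext x
    constructor
    · rintro ⟨l, hl, rfl⟩; exact ⟨l, hl, rfl⟩
    · rintro ⟨l, hl, rfl⟩; exact ⟨l, hl, rfl⟩
  rw [hset]
  refine hce.isClosedMap _ ?_
  have : {l : ι → ℝ | 0 ≤ l} = ⋂ i, (fun l : ι → ℝ => l i) ⁻¹' Set.Ici 0 := by
    ext l; simp [Pi.le_def, Set.mem_iInter]
  rw [this]
  exact isClosed_iInter fun i => isClosed_Ici.preimage (continuous_apply i)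

lemma isClosed_coneSet_aux : ∀ (k : ℕ) (ι : Type) (_ : Fintype ι) (v : ι → E),
    Fintype.card ι ≤ k → IsClosed (coneSet v) := by
  intro k
  induction k with
  | zero =>
    intro ι _ v hcard
    have : IsEmpty ι := Fintype.card_eq_zero_iff.mp (Nat.le_zero.mp hcard)
    exact isClosed_coneSet_of_li v linearIndependent_empty_type
  | succ k ih =>
    intro ι _ v hcard
    classical
    by_cases h : LinearIndependent ℝ v
    · exact isClosed_coneSet_of_li v h
    · obtain ⟨c, hc0, i₁, hci⟩ := Fintype.not_linearIndependent_iff.1 h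
      have main : ∀ c : ι → ℝ, (∑ i, c i • v i = 0) → (∃ i, 0 < c i) →
          IsClosed (coneSet v) := by
        rintro c hc0 ⟨i₂, hi₂⟩
        have key : coneSet v = ⋃ i ∈ {i | 0 < c i},
            coneSet (fun j : {j // j ≠ i} => v j) := by
          ext x
          simp only [Set.mem_iUnion, Set.mem_setOf_eq]
          constructor
          · rintro ⟨l, hl, rfl⟩
            set s : Finset ι := Finset.univ.filter (fun j => 0 < c j) with hs
            have hsne : s.Nonempty := ⟨i₂, by simp [hs, hi₂]⟩
            obtain ⟨i₀, hi₀s, hmin⟩ := s.exists_min_image (fun j => l j / c j) hsne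
            have hci₀ : 0 < c i₀ := by simpa [hs] using hi₀s
            set t : ℝ := l i₀ / c i₀ with ht
            have ht0 : 0 ≤ t := div_nonneg (hl i₀) hci₀.le
            set l' : ι → ℝ := fun j => l j - t * c j with hl'
            have hl'0 : 0 ≤ l' := by
              intro j
              have hlj : (0:ℝ) ≤ l j := hl j
              show (0:ℝ) ≤ l j - t * c j
              by_cases hcj : 0 < c j
              · have h1 := hmin j (by simp [hs, hcj])
                have h2 : t * c j ≤ l j := by
                  calc t * c j ≤ l j / c j * c j :=
                    mul_le_mul_of_nonneg_right h1 hcj.le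
                  _ = l j := div_mul_cancel₀ _ hcj.ne'
                linarith
              · push_neg at hcj
                have h2 : t * c j ≤ 0 := mul_nonpos_of_nonneg_of_nonpos ht0 hcj
                linarith
            have hl'i₀ : l' i₀ = 0 := by
              simp [hl', ht, div_mul_cancel₀ _ hci₀.ne']
            have hsum : ∑ j, l' j • v j = ∑ j, l j • v j := by
              have : ∑ j, l' j • v j = ∑ j, l j • v j - t • ∑ j, c j • v j := by
                rw [Finset.smul_sum]
                simp [hl', sub_smul, Finset.sum_sub_distrib, smul_smul]
              rw [this, hc0, smul_zero, sub_zero]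
            refine ⟨i₀, hci₀, fun j : {j // j ≠ i₀} => l' j, fun j => hl'0 j, ?_⟩
            rw [← hsum, ← Finset.sum_erase_add _ _ (Finset.mem_univ i₀), hl'i₀,
              zero_smul, add_zero,
              Finset.sum_subtype (p := fun j => j ≠ i₀) (F := inferInstance)
                (Finset.univ.erase i₀) (fun x => by simp) (fun j => l' j • v j)]
          · rintro ⟨i₀, _, l, hl, rfl⟩
            refine ⟨fun j => if h : j = i₀ then 0 else l ⟨j, h⟩, ?_, ?_⟩
            · intro j
              by_cases h : j = i₀
              · simp [h]
              · simpa [h] using hl ⟨j, h⟩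
            · rw [← Finset.sum_erase_add _ _ (Finset.mem_univ i₀),
                Finset.sum_subtype (p := fun j => j ≠ i₀) (F := inferInstance)
                  (Finset.univ.erase i₀) (fun x => by simp)
                  (fun j => (if h : j = i₀ then 0 else l ⟨j, h⟩) • v j)]
              have h2 : ∑ a : {j // j ≠ i₀}, (if h : (a:ι) = i₀ then 0 else l ⟨a, h⟩) • v a
                  = ∑ a : {j // j ≠ i₀}, l a • v a :=
                Finset.sum_congr rfl (fun a _ => by rw [dif_neg a.2])
              rw [h2]
              simp
        rw [key]
        refine Set.Finite.isClosed_biUnion (Set.toFinite _) ?_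
        intro i _
        refine ih {j // j ≠ i} inferInstance _ ?_
        have : Fintype.card {j // j ≠ i} < Fintype.card ι :=
          Fintype.card_subtype_lt (x := i) (by simp)
        omega
      rcases lt_or_gt_of_ne hci with hneg | hpos
      · refine main (-c) (by simpa using hc0) ⟨i₁, by simpa using hneg⟩
      · exact main c hc0 ⟨i₁, hpos⟩

lemma isClosed_coneSet {ι : Type} [Fintype ι] (v : ι → E) : IsClosed (coneSet v) :=
  isClosed_coneSet_aux (Fintype.card ι) ι inferInstance v le_rfl

lemma mem_coneSet_single {ι : Type} [Fintype ι] [DecidableEq ι] (v : ι → E) (i : ι) :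
    v i ∈ coneSet v := by
  refine ⟨Pi.single i 1, ?_, ?_⟩
  · intro j
    by_cases h : j = i <;> simp [Pi.single_apply, h]
  · simp [Pi.single_apply, ite_smul]

lemma polar_eq_coneSet {n : ℕ} {ι : Type} [Fintype ι] (v : ι → EuclideanSpace ℝ (Fin n)) :
    {y : EuclideanSpace ℝ (Fin n) | ∀ x, (∀ i, ⟪v i, x⟫ ≤ 0) → ⟪x, y⟫ ≤ 0} = coneSet v := by
  classical
  ext y
  simp only [Set.mem_setOf_eq]
  constructor
  · intro hy
    by_contra hyK
    let K : ConvexCone ℝ (EuclideanSpace ℝ (Fin n)) :=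
      { carrier := coneSet v
        smul_mem' := by
          rintro a ha x ⟨l, hl, rfl⟩
          exact ⟨a • l, fun i => mul_nonneg ha.le (hl i),
            by simp [Finset.smul_sum, smul_smul]⟩
        add_mem' := by
          rintro x ⟨l, hl, rfl⟩ z ⟨m, hm, rfl⟩
          exact ⟨l + m, fun i => add_nonneg (hl i) (hm i),
            by simp [add_smul, Finset.sum_add_distrib]⟩ }
    have hne : (K : Set (EuclideanSpace ℝ (Fin n))).Nonempty :=
      ⟨0, ⟨0, le_rfl, by simp⟩⟩
    have hcl : IsClosed (K : Set (EuclideanSpace ℝ (Fin n))) := isClosed_coneSet v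
    have hyK' : y ∉ K := hyK
    let C : ProperCone ℝ (EuclideanSpace ℝ (Fin n)) :=
      { carrier := coneSet v
        add_mem' := fun hx hz => K.add_mem' hx hz
        zero_mem' := ⟨0, le_rfl, by simp⟩
        smul_mem' := by
          rintro c x ⟨l, hl, rfl⟩
          exact ⟨(c : ℝ) • l, fun i => mul_nonneg c.2 (hl i),
            by rw [Finset.smul_sum]; exact Finset.sum_congr rfl fun i _ => smul_smul (c : ℝ) (l i) (v i)⟩
        isClosed' := hcl }
    obtain ⟨z, hz1, hz2⟩ :=
      ProperCone.hyperplane_separation' C hyK'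
    rw [real_inner_comm] at hz2
    have h3 := hy (-z) (fun i => by
      have h4 := hz1 (v i) (mem_coneSet_single v i)
      rw [inner_neg_right]; linarith)
    rw [inner_neg_left] at h3
    linarith
  · rintro ⟨l, hl, rfl⟩ x hx
    rw [inner_sum]
    apply Finset.sum_nonpos
    intro i _
    rw [real_inner_smul_right]
    exact mul_nonpos_of_nonneg_of_nonpos (hl i) (by rw [real_inner_comm]; exact hx i)

lemma transpose_mulVec_eq_sum {m n : ℕ} (M : Matrix (Fin m) (Fin n) ℝ) (μ : Fin m → ℝ) :
    Mᵀ.mulVec μ = ∑ i, μ i • M i := by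
  ext j
  simp [Matrix.mulVec, dotProduct, Matrix.transpose_apply, Finset.sum_apply,
    mul_comm]

theorem polar_of_polyhedral_cone {n m₁ m₂ : ℕ}
    (A : Matrix (Fin m₁) (Fin n) ℝ) (B : Matrix (Fin m₂) (Fin n) ℝ) :
    {y : Fin n → ℝ |
        ∀ x ∈ {x : Fin n → ℝ | A.mulVec x ≤ 0 ∧ B.mulVec x = 0}, x ⬝ᵥ y ≤ 0} =
      {y : Fin n → ℝ | ∃ (μ : Fin m₁ → ℝ) (ν : Fin m₂ → ℝ),
        0 ≤ μ ∧ y = Aᵀ.mulVec μ + Bᵀ.mulVec ν} := by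
  classical
  set v : (Fin m₁ ⊕ (Fin m₂ ⊕ Fin m₂)) → EuclideanSpace ℝ (Fin n) :=
    Sum.elim (fun i => (WithLp.toLp 2 (A i) : EuclideanSpace ℝ (Fin n)))
      (Sum.elim (fun j => (WithLp.toLp 2 (B j) : EuclideanSpace ℝ (Fin n)))
        (fun j => (WithLp.toLp 2 (-(B j)) : EuclideanSpace ℝ (Fin n)))) with hv
  have hinner : ∀ x y : EuclideanSpace ℝ (Fin n),
      ⟪x, y⟫ = (x : Fin n → ℝ) ⬝ᵥ (y : Fin n → ℝ) := by
    intro x y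
    simp [PiLp.inner_apply, RCLike.inner_apply, dotProduct, mul_comm]
  have hpolar := polar_eq_coneSet v
  ext y
  simp only [Set.mem_setOf_eq]
  constructor
  · intro hy
    have hyp : (WithLp.toLp 2 y : EuclideanSpace ℝ (Fin n)) ∈
        {y : EuclideanSpace ℝ (Fin n) | ∀ x, (∀ i, ⟪v i, x⟫ ≤ 0) → ⟪x, y⟫ ≤ 0} := by
      intro x hx
      rw [hinner]
      refine hy x.ofLp ⟨?_, ?_⟩
      · intro i
        have := hx (Sum.inl i)
        rw [hv] at this
        simp only [Sum.elim_inl] at this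
        rw [hinner] at this
        exact this
      · funext j
        have h1 := hx (Sum.inr (Sum.inl j))
        have h2 := hx (Sum.inr (Sum.inr j))
        rw [hv] at h1 h2
        simp only [Sum.elim_inr, Sum.elim_inl] at h1 h2
        rw [hinner] at h1
        rw [hinner] at h2
        simp only [WithLp.ofLp_toLp] at h2
        rw [neg_dotProduct] at h2
        have : B j ⬝ᵥ x.ofLp = 0 := le_antisymm h1 (by linarith)
        exact this
    rw [hpolar] at hyp
    obtain ⟨l, hl, hly⟩ := hyp
    refine ⟨fun i => l (Sum.inl i), fun j => l (Sum.inr (Sum.inl j)) - l (Sum.inr (Sum.inr j)),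
      fun i => hl (Sum.inl i), ?_⟩
    rw [transpose_mulVec_eq_sum, transpose_mulVec_eq_sum]
    have : y = (∑ k, l k • v k).ofLp := congrArg WithLp.ofLp hly
    rw [this, hv, Fintype.sum_sum_type, Fintype.sum_sum_type]
    simp only [Sum.elim_inl, Sum.elim_inr]
    simp only [WithLp.ofLp_add, WithLp.ofLp_sum, WithLp.ofLp_smul, WithLp.ofLp_toLp]
    rw [show (∑ j, (l (Sum.inr (Sum.inl j)) - l (Sum.inr (Sum.inr j))) • B j)
        = ∑ j, l (Sum.inr (Sum.inl j)) • B j - ∑ j, l (Sum.inr (Sum.inr j)) • B j by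
      rw [← Finset.sum_sub_distrib]; exact Finset.sum_congr rfl fun j _ => sub_smul _ _ _]
    have hneg : ∑ j, l (Sum.inr (Sum.inr j)) • (-(B j) : Fin n → ℝ)
        = -∑ j, l (Sum.inr (Sum.inr j)) • (B j : Fin n → ℝ) := by
      simp [smul_neg]
    rw [hneg]
    abel
  · rintro ⟨μ, ν, hμ, rfl⟩
    have hyp : (WithLp.toLp 2 (Aᵀ.mulVec μ + Bᵀ.mulVec ν) : EuclideanSpace ℝ (Fin n)) ∈ coneSet v := by
      refine ⟨Sum.elim μ (Sum.elim (fun j => max (ν j) 0) (fun j => max (-ν j) 0)), ?_, ?_⟩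
      · intro k
        rcases k with i | j | j
        · exact hμ i
        · exact le_max_right _ _
        · exact le_max_right _ _
      · rw [hv, Fintype.sum_sum_type, Fintype.sum_sum_type]
        simp only [Sum.elim_inl, Sum.elim_inr]
        rw [transpose_mulVec_eq_sum, transpose_mulVec_eq_sum]
        simp only [WithLp.toLp_add, WithLp.toLp_sum, WithLp.toLp_smul]
        congr 1
        have : ∀ j, max (ν j) 0 • (WithLp.toLp 2 (B j) : EuclideanSpace ℝ (Fin n))
            + max (-ν j) 0 • (WithLp.toLp 2 (-(B j)) : EuclideanSpace ℝ (Fin n)) = ν j • WithLp.toLp 2 (B j) := by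
          intro j
          rw [WithLp.toLp_neg, smul_neg, ← sub_eq_add_neg, ← sub_smul]
          congr 1
          rcases le_total (ν j) 0 with h | h
          · rw [max_eq_right h, max_eq_left (by linarith)]; ring
          · rw [max_eq_left h, max_eq_right (by linarith)]; ring
        rw [← Finset.sum_add_distrib]
        exact Finset.sum_congr rfl fun j _ => (this j).symm
    rw [← hpolar] at hyp
    intro x hx
    rw [show x ⬝ᵥ (Aᵀ.mulVec μ + Bᵀ.mulVec ν) = ⟪WithLp.toLp 2 x, WithLp.toLp 2 (Aᵀ.mulVec μ + Bᵀ.mulVec ν)⟫ from (hinner _ _).symm]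
    refine hyp (WithLp.toLp 2 x) ?_
    intro k
    rw [hv]
    rcases k with i | j | j
    · simp only [Sum.elim_inl]
      rw [hinner]
      exact hx.1 i
    · simp only [Sum.elim_inr, Sum.elim_inl]
      rw [hinner]
      have : B.mulVec x j = 0 := congrFun hx.2 j
      exact le_of_eq this
    · simp only [Sum.elim_inr]
      rw [hinner]
      simp only [WithLp.ofLp_toLp]
      rw [neg_dotProduct]
      have : B.mulVec x j = 0 := congrFun hx.2 j
      rw [show B j ⬝ᵥ x = B.mulVec x j from rfl, this, neg_zero]
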